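/- For the linear Gaussian state space model, the prior kernel x_{t−1} ↦ N(φ x_{t−1}, σ²) has Wasserstein Lipschitz constant exactly |φ|, and the filtered kernel has Lipschitz constant |φ|τ²/(σ²+τ²), which is strictly smaller than the prior kernel's Lipschitz constant whenever φ ≠ 0 and σ > 0; hence conditioning on the observation strictly improves the contraction rate. -/

import Mathlib

open MeasureTheory ProbabilityTheory
open scoped ENNReal NNReal

/-- The `p`-Wasserstein distance, defined as an infimum over couplings. -/
noncomputable def wassersteinP {E : Type*} [NormedAddCommGroup E] [MeasurableSpace E]
    (p : ℝ) (μ ν : Measure E) : ℝ :=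
  sInf { c | ∃ π : Measure (E × E), IsProbabilityMeasure π ∧
      π.map Prod.fst = μ ∧ π.map Prod.snd = ν ∧
      c = (∫ z, ‖z.1 - z.2‖ ^ p ∂π) ^ (1 / p) }

lemma gaussianReal_map_neg (v : ℝ≥0) :
    (gaussianReal 0 v).map (fun x => -x) = gaussianReal 0 v := by
  have h := gaussianReal_map_const_mul (μ := 0) (v := v) (-1)
  have h2 : (fun x : ℝ => -1 * x) = fun x : ℝ => -x := by funext x; ring
  rw [h2] at h
  rw [h]
  congr 1
  · ring
  · ext; simp

lemma memLp_id_gaussianReal0 (v : ℝ≥0) (hv : v ≠ 0) {p : ℝ} (hp : 0 < p) :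
    MemLp id (ENNReal.ofReal p) (gaussianReal 0 v) := by
  have hp0 : ENNReal.ofReal p ≠ 0 := by simp [ENNReal.ofReal_eq_zero, not_le, hp]
  have hptop : ENNReal.ofReal p ≠ ∞ := ENNReal.ofReal_ne_top
  have hvpos : (0 : ℝ) < v := by positivity
  have key : Integrable (fun x : ℝ => ‖x‖ ^ p) (gaussianReal 0 v) := by
    rw [gaussianReal_of_var_ne_zero _ hv,
      integrable_withDensity_iff (measurable_gaussianPDF 0 v)
        (Filter.Eventually.of_forall fun x => ENNReal.ofReal_lt_top)]
    have heq : ∀ x : ℝ, ‖x‖ ^ p * ((gaussianPDF 0 v x).toReal)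
        = (Real.sqrt (2 * Real.pi * v))⁻¹ *
          (|x| ^ p * Real.exp (-(1/(2*(v:ℝ))) * x ^ 2)) := by
      intro x
      rw [gaussianPDF, ENNReal.toReal_ofReal (gaussianPDFReal_nonneg 0 v x),
        gaussianPDFReal, Real.norm_eq_abs]
      rw [show -(x - 0)^2 / (2 * (v:ℝ)) = -(1/(2*(v:ℝ))) * x ^ 2 by
        rw [sub_zero]; field_simp]
      ring
    simp only [heq]
    have hb : (0:ℝ) < 1/(2*(v:ℝ)) := by positivity
    have hFpos : IntegrableOn (fun x : ℝ => |x| ^ p * Real.exp (-(1/(2*(v:ℝ))) * x ^ 2))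
        (Set.Ioi 0) := by
      refine ((integrableOn_rpow_mul_exp_neg_mul_sq hb (s := p)
        (by linarith)).congr_fun ?_ measurableSet_Ioi)
      intro x hx
      simp only
      rw [abs_of_pos hx]
    have hF : Integrable (fun x : ℝ => |x| ^ p * Real.exp (-(1/(2*(v:ℝ))) * x ^ 2)) := by
      rw [← integrableOn_univ, ← Set.Iio_union_Ici (a := (0:ℝ)), integrableOn_union,
        integrableOn_Ici_iff_integrableOn_Ioi]
      refine ⟨?_, hFpos⟩
      rw [← (Measure.measurePreserving_neg (volume : Measure ℝ)).integrableOn_comp_preimage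
          (Homeomorph.neg ℝ).measurableEmbedding]
      simpa only [Function.comp_def, abs_neg, neg_sq, Set.neg_preimage, Set.neg_Iio,
        neg_neg, neg_zero] using hFpos
    exact hF.const_mul _
  have h1 : MemLp (fun x : ℝ => ‖(id x : ℝ)‖ ^ (ENNReal.ofReal p).toReal)
      (ENNReal.ofReal p / ENNReal.ofReal p) (gaussianReal 0 v) := by
    rw [ENNReal.div_self hp0 hptop, memLp_one_iff_integrable]
    simpa [ENNReal.toReal_ofReal hp.le] using key
  exact (memLp_norm_rpow_iff aestronglyMeasurable_id hp0 hptop).1 h1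

lemma gaussianReal_eq_map (m : ℝ) (v : ℝ≥0) :
    gaussianReal m v = (gaussianReal 0 v).map (· + m) := by
  rw [gaussianReal_map_add_const m, zero_add]

lemma memLp_id_gaussianReal (m : ℝ) (v : ℝ≥0) {p : ℝ} (hp : 0 < p) :
    MemLp id (ENNReal.ofReal p) (gaussianReal m v) := by
  by_cases hv : v = 0
  · subst hv
    rw [gaussianReal_zero_var]
    have hae : (fun _ : ℝ => m) =ᵐ[Measure.dirac m] id := by
      rw [MeasureTheory.ae_dirac_eq]
      exact Filter.eventually_pure.2 rfl
    exact (memLp_const m).ae_eq hae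
  · rw [gaussianReal_eq_map m v,
      memLp_map_measure_iff aestronglyMeasurable_id (measurable_add_const m).aemeasurable]
    have := (memLp_id_gaussianReal0 v hv hp).add (memLp_const (p := ENNReal.ofReal p)
      (μ := gaussianReal 0 v) m)
    exact this

lemma integrable_id_gaussianReal (m : ℝ) (v : ℝ≥0) :
    Integrable id (gaussianReal m v) := by
  rw [← memLp_one_iff_integrable]
  simpa [ENNReal.ofReal_one] using memLp_id_gaussianReal m v one_pos

lemma integral_id_gaussianReal (m : ℝ) (v : ℝ≥0) :
    ∫ x, x ∂gaussianReal m v = m := by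
  have h0 : ∫ x, x ∂gaussianReal 0 v = 0 := by
    have h1 : ∫ x, x ∂((gaussianReal 0 v).map (fun x => -x)) = ∫ x, -x ∂gaussianReal 0 v :=
      integral_map measurable_neg.aemeasurable measurable_id.aestronglyMeasurable
    have hsymm : ∫ x, x ∂gaussianReal 0 v = ∫ x, -x ∂gaussianReal 0 v := by
      rw [← h1, gaussianReal_map_neg v]
    rw [integral_neg] at hsymm
    linarith
  have h2 : ∫ x, x ∂((gaussianReal 0 v).map (· + m)) = ∫ x, x + m ∂gaussianReal 0 v :=
    integral_map (measurable_add_const m).aemeasurable measurable_id.aestronglyMeasurable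
  have hint : Integrable (fun x : ℝ => x) (gaussianReal 0 v) := integrable_id_gaussianReal 0 v
  rw [gaussianReal_eq_map m v, h2]
  rw [integral_add hint (integrable_const m)]
  simp [h0]

lemma wassersteinP_gaussianReal (m m' : ℝ) (v : ℝ≥0) {p : ℝ} (hp : 1 ≤ p) :
    wassersteinP p (gaussianReal m v) (gaussianReal m' v) = |m - m'| := by
  have hp0 : (0:ℝ) < p := lt_of_lt_of_le one_pos hp
  have hpne : p ≠ 0 := hp0.ne'
  -- the translation coupling
  set f : ℝ → ℝ × ℝ := fun x => (x, x + (m' - m)) with hf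
  have hfmeas : Measurable f := measurable_id.prodMk (measurable_add_const _)
  set π₀ : Measure (ℝ × ℝ) := (gaussianReal m v).map f with hπ₀
  have hmem : |m - m'| ∈ { c | ∃ π : Measure (ℝ × ℝ), IsProbabilityMeasure π ∧
      π.map Prod.fst = gaussianReal m v ∧ π.map Prod.snd = gaussianReal m' v ∧
      c = (∫ z, ‖z.1 - z.2‖ ^ p ∂π) ^ (1 / p) } := by
    refine ⟨π₀, ?_, ?_, ?_, ?_⟩
    · exact Measure.isProbabilityMeasure_map hfmeas.aemeasurable
    · rw [hπ₀, Measure.map_map measurable_fst hfmeas]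
      exact Measure.map_id
    · rw [hπ₀, Measure.map_map measurable_snd hfmeas]
      have : (Prod.snd ∘ f) = (· + (m' - m)) := rfl
      rw [this, gaussianReal_map_add_const]
      congr 1; ring
    · rw [hπ₀, integral_map hfmeas.aemeasurable]
      · simp only [hf]
        have : ∀ x : ℝ, ‖x - (x + (m' - m))‖ ^ p = |m - m'| ^ p := by
          intro x
          rw [show x - (x + (m' - m)) = m - m' by ring, Real.norm_eq_abs]
        simp only [this]
        rw [integral_const]
        simp only [measure_univ, probReal_univ, ENNReal.toReal_one, one_smul]
        rw [← Real.rpow_mul (abs_nonneg _), mul_one_div, div_self hpne, Real.rpow_one]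
      · exact ((Real.continuous_rpow_const hp0.le).measurable.comp
          ((measurable_fst.sub measurable_snd).norm)).aestronglyMeasurable
  have hpE0 : ENNReal.ofReal p ≠ 0 := by simp [ENNReal.ofReal_eq_zero, not_le, hp0]
  have hpEtop : ENNReal.ofReal p ≠ ∞ := ENNReal.ofReal_ne_top
  have hp1E : (1 : ℝ≥0∞) ≤ ENNReal.ofReal p := by
    rw [← ENNReal.ofReal_one]; exact ENNReal.ofReal_le_ofReal hp
  apply le_antisymm
  · refine csInf_le ⟨0, fun c hc => ?_⟩ hmem
    obtain ⟨π, hπ, h1, h2, rfl⟩ := hc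
    exact Real.rpow_nonneg (integral_nonneg fun z => Real.rpow_nonneg (norm_nonneg _) p) _
  · refine le_csInf ⟨_, hmem⟩ ?_
    rintro c ⟨π, hπprob, hfst, hsnd, rfl⟩
    haveI := hπprob
    have hmem1 : MemLp (fun z : ℝ × ℝ => z.1) (ENNReal.ofReal p) π := by
      have h := memLp_id_gaussianReal m v hp0
      rw [← hfst] at h
      exact (memLp_map_measure_iff aestronglyMeasurable_id measurable_fst.aemeasurable).1 h
    have hmem2 : MemLp (fun z : ℝ × ℝ => z.2) (ENNReal.ofReal p) π := by
      have h := memLp_id_gaussianReal m' v hp0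
      rw [← hsnd] at h
      exact (memLp_map_measure_iff aestronglyMeasurable_id measurable_snd.aemeasurable).1 h
    have hsub : MemLp (fun z : ℝ × ℝ => z.1 - z.2) (ENNReal.ofReal p) π := hmem1.sub hmem2
    have hint1 : Integrable (fun z : ℝ × ℝ => z.1) π := hmem1.integrable hp1E
    have hint2 : Integrable (fun z : ℝ × ℝ => z.2) π := hmem2.integrable hp1E
    have hmean1 : ∫ z : ℝ × ℝ, z.1 ∂π = m := by
      have h : ∫ x, x ∂(π.map Prod.fst) = ∫ z : ℝ × ℝ, z.1 ∂π :=
        integral_map measurable_fst.aemeasurable measurable_id.aestronglyMeasurable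
      rw [← h, hfst, _root_.integral_id_gaussianReal]
    have hmean2 : ∫ z : ℝ × ℝ, z.2 ∂π = m' := by
      have h : ∫ x, x ∂(π.map Prod.snd) = ∫ z : ℝ × ℝ, z.2 ∂π :=
        integral_map measurable_snd.aemeasurable measurable_id.aestronglyMeasurable
      rw [← h, hsnd, _root_.integral_id_gaussianReal]
    have hmeans : ∫ z : ℝ × ℝ, (z.1 - z.2) ∂π = m - m' := by
      rw [integral_sub hint1 hint2, hmean1, hmean2]
    have hstep1 : |m - m'| ≤ ∫ z : ℝ × ℝ, ‖z.1 - z.2‖ ∂π := by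
      rw [← hmeans, ← Real.norm_eq_abs]
      exact norm_integral_le_integral_norm _
    have hstep2 : ∫ z : ℝ × ℝ, ‖z.1 - z.2‖ ∂π ≤ (∫ z : ℝ × ℝ, ‖z.1 - z.2‖ ^ p ∂π) ^ (1 / p) := by
      rcases eq_or_lt_of_le hp with heq1 | hlt
      · simp [← heq1, Real.rpow_one]
      · have hpq : p.HolderConjugate (p / (p - 1)) := Real.HolderConjugate.conjExponent hlt
        have h1' : MemLp (fun z : ℝ × ℝ => ‖z.1 - z.2‖) (ENNReal.ofReal p) π := hsub.norm
        have hg : MemLp (fun _ : ℝ × ℝ => (1 : ℝ)) (ENNReal.ofReal (p / (p - 1))) π :=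
          memLp_const 1
        have hhold := integral_mul_le_Lp_mul_Lq_of_nonneg hpq
          (Filter.Eventually.of_forall fun z => norm_nonneg _)
          (Filter.Eventually.of_forall fun _ => zero_le_one) h1' hg
        simpa [Real.one_rpow, measure_univ] using hhold
    exact hstep1.trans hstep2

/-- For the 1-D linear Gaussian state space model, the prior kernel `x ↦ N(φx, σ²)` has
Wasserstein Lipschitz constant exactly `|φ|`, the filtered kernel
`x ↦ N((σ²y + φτ²x)/(σ²+τ²), σ²τ²/(σ²+τ²))` has Lipschitz constant `|φ|τ²/(σ²+τ²)`, and the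
latter is strictly smaller whenever `φ ≠ 0` and `σ > 0`: conditioning on the observation
strictly improves the contraction rate. -/
theorem lgssm_filtered_improves_prior_contraction (σ τ : NNReal) (hσ : 0 < σ) (hτ : 0 < τ)
    (φ y : ℝ) (p : ℝ) (hp : 1 ≤ p) :
    (∀ x x' : ℝ, wassersteinP p (gaussianReal (φ * x) (σ ^ 2))
        (gaussianReal (φ * x') (σ ^ 2)) = |φ| * |x - x'|) ∧
    (∀ x x' : ℝ, wassersteinP p
        (gaussianReal (((σ : ℝ) ^ 2 * y + φ * (τ : ℝ) ^ 2 * x) / ((σ : ℝ) ^ 2 + (τ : ℝ) ^ 2))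
          (σ ^ 2 * τ ^ 2 / (σ ^ 2 + τ ^ 2)))
        (gaussianReal (((σ : ℝ) ^ 2 * y + φ * (τ : ℝ) ^ 2 * x') / ((σ : ℝ) ^ 2 + (τ : ℝ) ^ 2))
          (σ ^ 2 * τ ^ 2 / (σ ^ 2 + τ ^ 2)))
        = |φ| * (τ : ℝ) ^ 2 / ((σ : ℝ) ^ 2 + (τ : ℝ) ^ 2) * |x - x'|) ∧
    (φ ≠ 0 → |φ| * (τ : ℝ) ^ 2 / ((σ : ℝ) ^ 2 + (τ : ℝ) ^ 2) < |φ|) := by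
  have hσ' : (0:ℝ) < (σ:ℝ) := hσ
  have hτ' : (0:ℝ) < (τ:ℝ) := hτ
  have hd : (0:ℝ) < (σ:ℝ)^2 + (τ:ℝ)^2 := by positivity
  refine ⟨fun x x' => ?_, fun x x' => ?_, fun hφ => ?_⟩
  · rw [wassersteinP_gaussianReal _ _ _ hp,
      show φ * x - φ * x' = φ * (x - x') by ring, abs_mul]
  · rw [wassersteinP_gaussianReal _ _ _ hp, div_sub_div_same,
      show (σ:ℝ)^2*y + φ*(τ:ℝ)^2*x - ((σ:ℝ)^2*y + φ*(τ:ℝ)^2*x') = φ*(τ:ℝ)^2*(x-x') by ring,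
      abs_div, abs_of_pos hd, abs_mul, abs_mul, abs_of_nonneg (sq_nonneg (τ:ℝ))]
    ring
  · have hφ' : 0 < |φ| := abs_pos.mpr hφ
    rw [div_lt_iff₀ hd]
    nlinarith [mul_pos hφ' (pow_pos hσ' 2)]
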